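/- arXiv:1107.0088 — 4 statements merged into one kernel-verified Lean document; each statement's English description precedes it below -/
import Mathlib

section
/- Let A be a symmetric n×n real matrix and let X be a nonzero symmetric positive semidefinite n×n real matrix. Let u ∈ ℝ and δ_U > 0, and suppose λ_max(A) < u. Set u' := u + δ_U and M := u'·I − A, and define U_A(X) := ⟨M^{−2}, X⟩ / (Φ^u(A) − Φ^{u'}(A)) + ⟨M^{−1}, X⟩. If α > 0 satisfies 1/α ≥ U_A(X), then λ_max(A + α·X) < u' and Φ^{u'}(A + α·X) ≤ Φ^u(A). -/
open Matrix

/-- The upper potential `Φ^u(A) := tr((u·I − A)⁻¹)`. -/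
noncomputable def upperPot {n : ℕ} (u : ℝ) (A : Matrix (Fin n) (Fin n) ℝ) : ℝ :=
  (u • (1 : Matrix (Fin n) (Fin n) ℝ) - A)⁻¹.trace

variable {m : Type*} [Fintype m] [DecidableEq m]

open scoped MatrixOrder in
noncomputable def Matrix.PosSemidef.sqrt {P : Matrix m m ℝ} (_hP : P.PosSemidef) :
    Matrix m m ℝ := CFC.sqrt P

open scoped MatrixOrder in
lemma Matrix.PosSemidef.sqrt_mul_self {P : Matrix m m ℝ} (hP : P.PosSemidef) :
    hP.sqrt * hP.sqrt = P := CFC.sqrt_mul_sqrt_self P hP.nonneg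

open scoped MatrixOrder in
lemma Matrix.PosSemidef.posSemidef_sqrt {P : Matrix m m ℝ} (hP : P.PosSemidef) :
    hP.sqrt.PosSemidef := (CFC.sqrt_nonneg P).posSemidef

lemma my_trace_eq_sum_eigs {P : Matrix m m ℝ} (hP : P.IsHermitian) :
    P.trace = ∑ i, hP.eigenvalues i := by
  conv_lhs => rw [hP.spectral_theorem, Unitary.conjStarAlgAut_apply]
  rw [trace_mul_cycle]
  have h1 : (star (hP.eigenvectorUnitary : Matrix m m ℝ)) *
      (hP.eigenvectorUnitary : Matrix m m ℝ) = 1 := by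
    simpa using unitary.coe_star_mul_self hP.eigenvectorUnitary
  rw [h1, Matrix.one_mul, trace_diagonal]
  simp

lemma my_psd_trace_nonneg {P : Matrix m m ℝ} (hP : P.PosSemidef) : 0 ≤ P.trace := by
  rw [my_trace_eq_sum_eigs hP.1]
  exact Finset.sum_nonneg fun i _ => hP.eigenvalues_nonneg i

lemma my_pd_trace_pos [Nonempty m] {P : Matrix m m ℝ} (hP : P.PosDef) : 0 < P.trace := by
  rw [my_trace_eq_sum_eigs hP.1]
  exact Finset.sum_pos (fun i _ => hP.eigenvalues_pos i) Finset.univ_nonempty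

lemma my_psd_trace_eq_zero {P : Matrix m m ℝ} (hP : P.PosSemidef) (h : P.trace = 0) :
    P = 0 := by
  have h0 : ∀ i, hP.1.eigenvalues i = 0 := by
    intro i
    have := my_trace_eq_sum_eigs hP.1
    rw [h] at this
    have := (Finset.sum_eq_zero_iff_of_nonneg (fun i _ => hP.eigenvalues_nonneg i)).mp this.symm
    exact this i (Finset.mem_univ i)
  have := hP.1.spectral_theorem
  rw [this]
  have : Matrix.diagonal (RCLike.ofReal ∘ hP.1.eigenvalues) = (0 : Matrix m m ℝ) := by
    ext i j
    by_cases hij : i = j <;> simp [Matrix.diagonal, hij, h0]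
  rw [this]
  simp

lemma my_trace_mul_psd_nonneg {P Q : Matrix m m ℝ} (hP : P.PosSemidef) (hQ : Q.PosSemidef) :
    0 ≤ (P * Q).trace := by
  have hs := hP.posSemidef_sqrt
  have hmul : P * Q = hP.sqrt * (hP.sqrt * Q) := by
    rw [← Matrix.mul_assoc, hP.sqrt_mul_self]
  rw [hmul, trace_mul_comm]
  have : hP.sqrt * Q * hP.sqrt = hP.sqrt * Q * hP.sqrtᴴ := by rw [hs.1.eq]
  rw [Matrix.mul_assoc]
  have := hQ.mul_mul_conjTranspose_same hP.sqrt
  rw [hs.1.eq] at this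
  exact my_psd_trace_nonneg (by rwa [Matrix.mul_assoc] at this)

lemma my_posDef_conj {P C : Matrix m m ℝ} (hP : P.PosDef) (hC : IsUnit C.det) :
    (Cᴴ * P * C).PosDef := by
  refine Matrix.PosDef.of_dotProduct_mulVec_pos ?_ (fun x hx => ?_)
  · show (Cᴴ * P * C)ᴴ = Cᴴ * P * C
    rw [conjTranspose_mul, conjTranspose_mul, conjTranspose_conjTranspose, hP.1.eq,
      Matrix.mul_assoc]
  have hCx : C *ᵥ x ≠ 0 := by
    intro h0
    apply hx
    have : C⁻¹ *ᵥ (C *ᵥ x) = x := by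
      rw [mulVec_mulVec, Matrix.nonsing_inv_mul _ hC, one_mulVec]
    rw [h0, mulVec_zero] at this
    exact this.symm
  have := hP.dotProduct_mulVec_pos hCx
  calc (0:ℝ) < star (C *ᵥ x) ⬝ᵥ (P *ᵥ (C *ᵥ x)) := this
    _ = star x ⬝ᵥ ((Cᴴ * P * C) *ᵥ x) := by
        rw [star_mulVec, ← mulVec_mulVec, ← dotProduct_mulVec, mulVec_mulVec]


section conj
variable (V : Matrix m m ℝ)

lemma my_conj_mul_conj (hV' : Vᴴ * V = 1) (g h : m → ℝ) :
    (V * diagonal g * Vᴴ) * (V * diagonal h * Vᴴ) = V * diagonal (fun i => g i * h i) * Vᴴ := by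
  have h1 : Vᴴ * (V * diagonal h * Vᴴ) = diagonal h * Vᴴ := by
    rw [← Matrix.mul_assoc, ← Matrix.mul_assoc, hV', Matrix.one_mul]
  rw [Matrix.mul_assoc (V * diagonal g), h1, ← Matrix.mul_assoc, Matrix.mul_assoc V,
    diagonal_mul_diagonal]

lemma my_conj_one (hV : V * Vᴴ = 1) : V * diagonal (fun _ : m => (1:ℝ)) * Vᴴ = 1 := by
  have : diagonal (fun _ : m => (1:ℝ)) = 1 := by simp [Matrix.diagonal_one]
  rw [this, Matrix.mul_one, hV]

lemma my_conj_inv (hV : V * Vᴴ = 1) (hV' : Vᴴ * V = 1) (g : m → ℝ) (hg : ∀ i, g i ≠ 0) :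
    (V * diagonal g * Vᴴ)⁻¹ = V * diagonal (fun i => (g i)⁻¹) * Vᴴ := by
  apply Matrix.inv_eq_right_inv
  rw [my_conj_mul_conj V hV']
  have : (fun i => g i * (g i)⁻¹) = fun _ : m => (1:ℝ) := by
    funext i; exact mul_inv_cancel₀ (hg i)
  rw [this, my_conj_one V hV]

lemma my_conj_add (g h : m → ℝ) :
    (V * diagonal g * Vᴴ) + (V * diagonal h * Vᴴ) = V * diagonal (fun i => g i + h i) * Vᴴ := by
  have : diagonal (fun i => g i + h i) = diagonal g + diagonal h := by
    rw [diagonal_add]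
  rw [this, Matrix.mul_add, Matrix.add_mul]

lemma my_conj_sub (g h : m → ℝ) :
    (V * diagonal g * Vᴴ) - (V * diagonal h * Vᴴ) = V * diagonal (fun i => g i - h i) * Vᴴ := by
  have : diagonal (fun i => g i - h i) = diagonal g - diagonal h := by
    rw [diagonal_sub]
  rw [this, Matrix.mul_sub, Matrix.sub_mul]

lemma my_conj_smul (a : ℝ) (g : m → ℝ) :
    a • (V * diagonal g * Vᴴ) = V * diagonal (fun i => a * g i) * Vᴴ := by
  have : diagonal (fun i => a * g i) = a • diagonal g := by
    ext i j; by_cases hij : i = j <;> simp [diagonal, hij]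
  rw [this, Matrix.mul_smul, Matrix.smul_mul]

lemma my_conj_psd (g : m → ℝ) (hg : ∀ i, 0 ≤ g i) :
    (V * diagonal g * Vᴴ).PosSemidef :=
  (PosSemidef.diagonal hg).mul_mul_conjTranspose_same V

lemma my_conj_pd (hV' : Vᴴ * V = 1) (g : m → ℝ) (hg : ∀ i, 0 < g i) :
    (V * diagonal g * Vᴴ).PosDef := by
  have hdet : IsUnit (Vᴴ).det := by
    refine IsUnit.of_mul_eq_one V.det ?_
    rw [← det_mul, hV', det_one]
  have h := my_posDef_conj (Matrix.PosDef.diagonal hg) hdet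
  rwa [conjTranspose_conjTranspose] at h
end conj

/-- **Analog of BSS Lemma 3.3 for arbitrary-rank updates.** Here the condition
`λ_max(A) < u` is expressed as positive definiteness of `u·I − A`, and
`λ_max(A + α X) < u'` as positive definiteness of `u'·I − (A + α X)`. -/
theorem bss_upper_barrier_shift {n : ℕ}
    (A X : Matrix (Fin n) (Fin n) ℝ) (hA : A.IsSymm) (hX : X.PosSemidef) (hX0 : X ≠ 0)
    (u δU : ℝ) (hδU : 0 < δU)
    (hu : (u • (1 : Matrix (Fin n) (Fin n) ℝ) - A).PosDef)
    (M : Matrix (Fin n) (Fin n) ℝ)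
    (hM : M = (u + δU) • (1 : Matrix (Fin n) (Fin n) ℝ) - A)
    (α : ℝ) (hα : 0 < α)
    (hUA : 1 / α ≥
      (M⁻¹ * M⁻¹ * X).trace / (upperPot u A - upperPot (u + δU) A) + (M⁻¹ * X).trace) :
    ((u + δU) • (1 : Matrix (Fin n) (Fin n) ℝ) - (A + α • X)).PosDef ∧
    upperPot (u + δU) (A + α • X) ≤ upperPot u A := by
  -- dispose of the degenerate case n = 0
  rcases Nat.eq_zero_or_pos n with h0 | hn
  · subst h0
    exact absurd (by ext i j; exact i.elim0) hX0
  haveI : Nonempty (Fin n) := ⟨⟨0, hn⟩⟩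
  set N : Matrix (Fin n) (Fin n) ℝ := u • (1 : Matrix (Fin n) (Fin n) ℝ) - A with hN
  -- M is positive definite
  have hδ1 : (δU • (1 : Matrix (Fin n) (Fin n) ℝ)).PosDef := by
    have h : δU • (1 : Matrix (Fin n) (Fin n) ℝ) = diagonal (fun _ => δU) := by
      ext i j; by_cases hij : i = j <;> simp [diagonal, hij, Matrix.one_apply]
    rw [h]
    exact Matrix.PosDef.diagonal (fun _ => hδU)
  have hMN : M = N + δU • 1 := by
    rw [hM, hN, add_smul]; abel
  have hMpd : M.PosDef := by rw [hMN]; exact hu.add hδ1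
  have hMdet : IsUnit M.det := isUnit_iff_ne_zero.mpr hMpd.det_pos.ne'
  have hNdet : IsUnit N.det := isUnit_iff_ne_zero.mpr hu.det_pos.ne'
  have hMinv : (M⁻¹).PosDef := hMpd.inv
  have hS : (M⁻¹).PosSemidef := hMinv.posSemidef
  set R : Matrix (Fin n) (Fin n) ℝ := hS.sqrt with hRdef
  have hRR : R * R = M⁻¹ := hS.sqrt_mul_self
  have hRpsd : R.PosSemidef := hS.posSemidef_sqrt
  have hRH : Rᴴ = R := hRpsd.1.eq
  have hRdet : IsUnit R.det := by
    have h1 : R.det * R.det = (M⁻¹).det := by rw [← det_mul, hRR]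
    refine isUnit_iff_ne_zero.mpr (fun h => ?_)
    rw [h, mul_zero] at h1
    exact hMinv.det_pos.ne' h1.symm
  have hMRR : M = R⁻¹ * R⁻¹ := by
    rw [← Matrix.nonsing_inv_nonsing_inv M hMdet, ← hRR, Matrix.mul_inv_rev]
  have hRMR : R * M * R = 1 := by
    rw [hMRR, ← Matrix.mul_assoc, Matrix.mul_nonsing_inv R hRdet, Matrix.one_mul,
      Matrix.nonsing_inv_mul R hRdet]
  -- the conjugated update matrix B
  set B : Matrix (Fin n) (Fin n) ℝ := R * X * R with hBdef
  have hBpsd : B.PosSemidef := by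
    have h := hX.mul_mul_conjTranspose_same R
    rwa [hRH] at h
  have hB : B.IsHermitian := hBpsd.1
  set d : Fin n → ℝ := hB.eigenvalues with hd
  set V : Matrix (Fin n) (Fin n) ℝ := (hB.eigenvectorUnitary : Matrix (Fin n) (Fin n) ℝ)
    with hV
  have hVV : V * Vᴴ = 1 := by
    have h : V * star V = 1 := (Matrix.mem_unitaryGroup_iff).mp hB.eigenvectorUnitary.2
    rwa [Matrix.star_eq_conjTranspose] at h
  have hVV' : Vᴴ * V = 1 := by
    have h : star V * V = 1 := (Matrix.mem_unitaryGroup_iff').mp hB.eigenvectorUnitary.2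
    rwa [Matrix.star_eq_conjTranspose] at h
  have hspec : B = V * diagonal (fun i => d i) * Vᴴ := by
    have h := hB.spectral_theorem
    rw [Unitary.conjStarAlgAut_apply] at h
    rw [← Matrix.star_eq_conjTranspose]
    convert h using 3 <;> rfl
  have hdnn : ∀ i, 0 ≤ d i := fun i => hBpsd.eigenvalues_nonneg i
  have ht : B.trace = ∑ i, d i := my_trace_eq_sum_eigs hB
  have hdt : ∀ i, d i ≤ B.trace := by
    intro i
    rw [ht]
    exact Finset.single_le_sum (fun j _ => hdnn j) (Finset.mem_univ i)
  -- trace identities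
  have trMX : (M⁻¹ * X).trace = B.trace := by
    rw [← hRR, hBdef]
    exact (trace_mul_cycle R X R).symm
  have trMMX : (M⁻¹ * M⁻¹ * X).trace = (M⁻¹ * B).trace := by
    rw [hBdef, ← hRR]
    have h1 : (R * R) * (R * X * R) = (R * (R * (R * X))) * R := by
      simp only [Matrix.mul_assoc]
    have h2 : R * (R * (R * (R * X))) = (R * R) * (R * R) * X := by
      simp only [Matrix.mul_assoc]
    conv_rhs => rw [h1, trace_mul_comm, h2]
  -- the potential difference is positive
  have hup' : upperPot (u + δU) A = (M⁻¹).trace := by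
    rw [upperPot, ← hM]
  have hup : upperPot u A = (N⁻¹).trace := by rw [upperPot, ← hN]
  have hNMinv : N⁻¹ - M⁻¹ = δU • (N⁻¹ * M⁻¹) := by
    have h1 : N⁻¹ * M * M⁻¹ = N⁻¹ := by
      rw [Matrix.mul_assoc, Matrix.mul_nonsing_inv M hMdet, Matrix.mul_one]
    have h0 : N⁻¹ * (N + δU • 1) * M⁻¹ = N⁻¹ * M * M⁻¹ := by rw [← hMN]
    have h2 : N⁻¹ * (N + δU • 1) * M⁻¹ = M⁻¹ + δU • (N⁻¹ * M⁻¹) := by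
      rw [Matrix.mul_add, Matrix.nonsing_inv_mul N hNdet, Matrix.mul_smul, Matrix.mul_one,
        Matrix.add_mul, Matrix.one_mul, Matrix.smul_mul]
    rw [h0, h1] at h2
    conv_lhs => rw [h2]
    abel
  have hRNR : (R * N⁻¹ * R).PosDef := by
    have h := my_posDef_conj hu.inv hRdet
    rwa [hRH] at h
  have hΔpos : 0 < upperPot u A - upperPot (u + δU) A := by
    rw [hup, hup', ← trace_sub, hNMinv, trace_smul, smul_eq_mul]
    have h1 : (N⁻¹ * M⁻¹).trace = (R * N⁻¹ * R).trace := by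
      rw [← hRR, trace_mul_cycle R N⁻¹ R, trace_mul_comm]
    rw [h1]
    exact mul_pos hδU (my_pd_trace_pos hRNR)
  -- positivity of the second-order trace term
  have hc : 0 < (M⁻¹ * M⁻¹ * X).trace := by
    have hP2 : (M⁻¹ * X * M⁻¹).PosSemidef := by
      have h := hX.mul_mul_conjTranspose_same M⁻¹
      rwa [hMinv.1.eq] at h
    have hP2ne : M⁻¹ * X * M⁻¹ ≠ 0 := by
      intro h
      apply hX0
      have h3 : M * (M⁻¹ * X * M⁻¹) * M = X := by
        calc M * (M⁻¹ * X * M⁻¹) * M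
            = (M * M⁻¹) * X * (M⁻¹ * M) := by simp only [Matrix.mul_assoc]
          _ = X := by
              rw [Matrix.mul_nonsing_inv M hMdet, Matrix.nonsing_inv_mul M hMdet,
                Matrix.one_mul, Matrix.mul_one]
      rw [h] at h3
      rw [← h3]; simp
    have h0 : (M⁻¹ * X * M⁻¹).trace ≠ 0 := fun h => hP2ne (my_psd_trace_eq_zero hP2 h)
    have h1 := my_psd_trace_nonneg hP2
    have h2 : (M⁻¹ * X * M⁻¹).trace = (M⁻¹ * M⁻¹ * X).trace :=
      trace_mul_cycle M⁻¹ X M⁻¹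
    rw [← h2]
    exact lt_of_le_of_ne h1 (Ne.symm h0)
  -- scalar bookkeeping
  set t : ℝ := B.trace with htdef
  set c : ℝ := (M⁻¹ * M⁻¹ * X).trace with hcdef
  set Δ : ℝ := upperPot u A - upperPot (u + δU) A with hΔdef
  have hcΔ : c ≤ (1 / α - t) * Δ := by
    have h1 : c / Δ ≤ 1 / α - t := by
      rw [trMX] at hUA; linarith
    calc c = c / Δ * Δ := (div_mul_cancel₀ c hΔpos.ne').symm
      _ ≤ (1 / α - t) * Δ := mul_le_mul_of_nonneg_right h1 hΔpos.le
  set s : ℝ := 1 - α * t with hsdef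
  have hαc : α * c ≤ s * Δ := by
    have h1 : α * ((1 / α - t) * Δ) = s * Δ := by
      rw [hsdef]
      field_simp
    calc α * c ≤ α * ((1 / α - t) * Δ) := mul_le_mul_of_nonneg_left hcΔ hα.le
      _ = s * Δ := h1
  have hspos : 0 < s := by
    nlinarith [mul_pos hα hc, hΔpos]
  have hkey : α / s * c ≤ Δ := by
    rw [div_mul_eq_mul_div, div_le_iff₀ hspos]
    calc α * c ≤ s * Δ := hαc
      _ = Δ * s := mul_comm _ _
  -- eigenvalue bounds
  set e : Fin n → ℝ := fun i => 1 - α * d i with hedef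
  have hse : ∀ i, s ≤ e i := by
    intro i
    have h1 := mul_le_mul_of_nonneg_left (hdt i) hα.le
    simp only [hedef, hsdef]
    linarith
  have hepos : ∀ i, 0 < e i := fun i => lt_of_lt_of_le hspos (hse i)
  have hene0 : ∀ i, e i ≠ 0 := fun i => (hepos i).ne'
  -- the conjugated matrices
  have hone : (1 : Matrix (Fin n) (Fin n) ℝ) = V * diagonal (fun _ : Fin n => (1:ℝ)) * Vᴴ :=
    (my_conj_one V hVV).symm
  have h1mB : (1 : Matrix (Fin n) (Fin n) ℝ) - α • B = V * diagonal e * Vᴴ := by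
    have hsm : α • B = V * diagonal (fun i => α * d i) * Vᴴ := by
      rw [hspec, my_conj_smul]
    conv_lhs => rw [hone, hsm, my_conj_sub]
  have hWpd : ((1 : Matrix (Fin n) (Fin n) ℝ) - α • B).PosDef := by
    rw [h1mB]
    exact my_conj_pd V hVV' e hepos
  -- R (M - α X) R = 1 - α B
  have hRMaXR : R * (M - α • X) * R = (1 : Matrix (Fin n) (Fin n) ℝ) - α • B := by
    rw [Matrix.mul_sub, Matrix.mul_smul, Matrix.sub_mul, Matrix.smul_mul, hRMR]
  have hRinvdet : IsUnit (R⁻¹).det := by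
    refine IsUnit.of_mul_eq_one R.det ?_
    rw [← det_mul, Matrix.nonsing_inv_mul R hRdet, det_one]
  have hMaX : M - α • X = R⁻¹ * ((1 : Matrix (Fin n) (Fin n) ℝ) - α • B) * R⁻¹ := by
    rw [← hRMaXR]
    calc M - α • X
        = (R⁻¹ * R) * (M - α • X) * (R * R⁻¹) := by
          rw [Matrix.nonsing_inv_mul R hRdet, Matrix.mul_nonsing_inv R hRdet,
            Matrix.one_mul, Matrix.mul_one]
      _ = R⁻¹ * (R * (M - α • X) * R) * R⁻¹ := by simp only [Matrix.mul_assoc]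
  have hgoal1eq : (u + δU) • (1 : Matrix (Fin n) (Fin n) ℝ) - (A + α • X) = M - α • X := by
    rw [hM, sub_sub]
  have hgoal1 : ((u + δU) • (1 : Matrix (Fin n) (Fin n) ℝ) - (A + α • X)).PosDef := by
    rw [hgoal1eq, hMaX]
    have hconj := my_posDef_conj hWpd hRinvdet
    rwa [conjTranspose_nonsing_inv, hRH] at hconj
  refine ⟨hgoal1, ?_⟩
  -- inverse of the shifted matrix
  have hMaXinv : (M - α • X)⁻¹ =
      R * ((1 : Matrix (Fin n) (Fin n) ℝ) - α • B)⁻¹ * R := by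
    rw [hMaX, Matrix.mul_inv_rev, Matrix.mul_inv_rev,
      Matrix.nonsing_inv_nonsing_inv R hRdet, Matrix.mul_assoc]
  have hWinv : ((1 : Matrix (Fin n) (Fin n) ℝ) - α • B)⁻¹ =
      V * diagonal (fun i => (e i)⁻¹) * Vᴴ := by
    rw [h1mB, my_conj_inv V hVV hVV' e hene0]
  set K : Matrix (Fin n) (Fin n) ℝ := V * diagonal (fun i => (e i)⁻¹ - 1) * Vᴴ with hKdef
  have hWinvK : ((1 : Matrix (Fin n) (Fin n) ℝ) - α • B)⁻¹ = 1 + K := by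
    have hfun : (fun i => (e i)⁻¹) = (fun i => 1 + ((e i)⁻¹ - 1)) := by funext i; ring
    rw [hWinv, hKdef]
    conv_rhs => rw [hone, my_conj_add]
    rw [hfun]
  -- G := (α/s) • B - K is PSD
  have hGpsd : ((α / s) • B - K).PosSemidef := by
    have hG : (α / s) • B - K = V * diagonal (fun i => α / s * d i - ((e i)⁻¹ - 1)) * Vᴴ := by
      conv_lhs => rw [hspec, my_conj_smul, hKdef, my_conj_sub]
    rw [hG]
    refine my_conj_psd V _ (fun i => ?_)
    have had : 0 ≤ α * d i := mul_nonneg hα.le (hdnn i)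
    have he : e i = 1 - α * d i := by simp only [hedef]
    have hse' : s ≤ 1 - α * d i := he ▸ hse i
    have hle : (e i)⁻¹ - 1 ≤ α / s * d i := by
      have h1 : (e i)⁻¹ - 1 = (1 - e i) / e i := by
        rw [sub_div, div_self (hene0 i), inv_eq_one_div]
      have h2 : α / s * d i = α * d i / s := by ring
      rw [h1, h2, div_le_div_iff₀ (hepos i) hspos, he]
      calc (1 - (1 - α * d i)) * s = α * d i * s := by ring
        _ ≤ α * d i * (1 - α * d i) := mul_le_mul_of_nonneg_left hse' had
    linarith
  -- trace comparison
  have htr1 : (M⁻¹ * ((α / s) • B - K)).trace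
      = α / s * (M⁻¹ * B).trace - (M⁻¹ * K).trace := by
    rw [Matrix.mul_sub, Matrix.mul_smul, trace_sub, trace_smul, smul_eq_mul]
  have htrG : 0 ≤ (M⁻¹ * ((α / s) • B - K)).trace := my_trace_mul_psd_nonneg hS hGpsd
  rw [← trMMX] at htr1
  have htrK : (M⁻¹ * K).trace ≤ Δ := by
    have h2 : (M⁻¹ * K).trace ≤ α / s * c := by linarith
    linarith
  -- final computation
  have hfinal : upperPot (u + δU) (A + α • X) = (M⁻¹).trace + (M⁻¹ * K).trace := by
    simp only [upperPot]
    rw [hgoal1eq, hMaXinv, hWinvK, Matrix.mul_add, Matrix.mul_one, Matrix.add_mul,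
      trace_add, hRR, trace_mul_cycle R K R, hRR]
  rw [hfinal]
  linarith [htrK, hup']
end

section
/- Let n ≥ 2, let A be a symmetric n×n real matrix, and let X be a symmetric positive semidefinite n×n real matrix. Let ℓ ∈ ℝ and δ_L > 0, and suppose λ_min(A) > ℓ and Φ_ℓ(A) ≤ 1/δ_L. Set ℓ' := ℓ + δ_L and N := A − ℓ'·I; then N is positive definite. Define L_A(X) := ⟨N^{−2}, X⟩ / (Φ_{ℓ'}(A) − Φ_ℓ(A)) − ⟨N^{−1}, X⟩. If α > 0 satisfies 1/α ≤ L_A(X), then λ_min(A + α·X) > ℓ' and Φ_{ℓ'}(A + α·X) ≤ Φ_ℓ(A). -/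
open Matrix

/-- The lower potential `Φ_ℓ(A) := tr((A − ℓ·I)⁻¹)`. -/
noncomputable def lowerPot {n : ℕ} (ℓ : ℝ) (A : Matrix (Fin n) (Fin n) ℝ) : ℝ :=
  (A - ℓ • (1 : Matrix (Fin n) (Fin n) ℝ))⁻¹.trace

namespace BSSAux

open scoped MatrixOrder

variable {n : ℕ}

lemma smul_posSemidef {X : Matrix (Fin n) (Fin n) ℝ} (hX : X.PosSemidef)
    {a : ℝ} (ha : 0 ≤ a) : (a • X).PosSemidef := by
  refine PosSemidef.of_dotProduct_mulVec_nonneg ?_ (fun x => ?_)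
  · show (a • X)ᴴ = a • X
    rw [conjTranspose_smul, hX.1.eq, star_trivial]
  · rw [smul_mulVec, dotProduct_smul, smul_eq_mul]
    exact mul_nonneg ha (hX.dotProduct_mulVec_nonneg x)

lemma posDef_of_posSemidef_isUnit {S : Matrix (Fin n) (Fin n) ℝ}
    (hS : S.PosSemidef) (h : IsUnit S) : S.PosDef := by
  refine PosDef.of_dotProduct_mulVec_pos hS.1 (fun x hx => lt_of_le_of_ne (hS.dotProduct_mulVec_nonneg x) fun h0 => hx ?_)
  have h1 : S *ᵥ x = 0 := (hS.dotProduct_mulVec_zero_iff x).mp h0.symm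
  have h2 := Matrix.mulVec_injective_iff_isUnit.mpr h
  exact h2 (by simpa using h1)

lemma conj_posDef {P U : Matrix (Fin n) (Fin n) ℝ} (hP : P.PosDef)
    (hU : IsUnit U) : (Uᴴ * P * U).PosDef := by
  refine PosDef.of_dotProduct_mulVec_pos (isHermitian_conjTranspose_mul_mul U hP.1) (fun x hx => ?_)
  have hx' : U *ᵥ x ≠ 0 := fun h => hx (Matrix.mulVec_injective_iff_isUnit.mpr hU (by simpa using h))
  simpa only [star_mulVec, dotProduct_mulVec, vecMul_vecMul] using hP.dotProduct_mulVec_pos hx'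

lemma trace_conj {U : Matrix (Fin n) (Fin n) ℝ} (h1 : star U * U = 1)
    (Z : Matrix (Fin n) (Fin n) ℝ) : (U * Z * star U).trace = Z.trace := by
  rw [Matrix.trace_mul_cycle, h1, one_mul]

lemma inv_conj {U : Matrix (Fin n) (Fin n) ℝ} (h1 : star U * U = 1) (h2 : U * star U = 1)
    (Z : Matrix (Fin n) (Fin n) ℝ) : (U * Z * star U)⁻¹ = U * Z⁻¹ * star U := by
  have hU : U⁻¹ = star U := Matrix.inv_eq_left_inv h1
  have hUs : (star U)⁻¹ = U := Matrix.inv_eq_left_inv h2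
  rw [Matrix.mul_inv_rev, Matrix.mul_inv_rev, hU, hUs, Matrix.mul_assoc]

lemma inv_diagonal' {v : Fin n → ℝ} (hv : ∀ i, v i ≠ 0) :
    (diagonal v)⁻¹ = diagonal fun i => (v i)⁻¹ := by
  refine Matrix.inv_eq_left_inv ?_
  have e : (fun i => (v i)⁻¹ * v i) = fun _ => (1:ℝ) := funext fun i => inv_mul_cancel₀ (hv i)
  rw [diagonal_mul_diagonal, e]
  exact diagonal_one

lemma conj_diag_posDef {U : Matrix (Fin n) (Fin n) ℝ} (h1 : star U * U = 1)
    {v : Fin n → ℝ} (hv : ∀ i, 0 < v i) : (U * diagonal v * star U).PosDef := by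
  have : Invertible (star U) := invertibleOfRightInverse _ _ h1
  have h := conj_posDef (Matrix.posDef_diagonal_iff.mpr hv) (isUnit_of_invertible (star U))
  have e : (star U)ᴴ = U := by
    rw [← Matrix.star_eq_conjTranspose, star_star]
  rwa [e] at h

lemma diag_nonneg {W : Matrix (Fin n) (Fin n) ℝ} (hW : W.PosSemidef) (i : Fin n) :
    0 ≤ W i i := by
  exact hW.diag_nonneg

lemma trace_diag_mul (c : Fin n → ℝ) (W : Matrix (Fin n) (Fin n) ℝ) :
    (diagonal c * W).trace = ∑ i, c i * W i i := by
  simp [Matrix.trace, Matrix.diag, Matrix.diagonal_mul]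

lemma trace_conj_diag {U : Matrix (Fin n) (Fin n) ℝ}
    (c : Fin n → ℝ) (Z : Matrix (Fin n) (Fin n) ℝ) :
    (U * diagonal c * star U * Z).trace = ∑ i, c i * (star U * Z * U) i i := by
  have e : U * diagonal c * star U * Z = U * (diagonal c * (star U * Z)) := by
    simp only [Matrix.mul_assoc]
  rw [e, Matrix.trace_mul_comm]
  have e2 : diagonal c * (star U * Z) * U = diagonal c * (star U * Z * U) := by
    simp only [Matrix.mul_assoc]
  rw [e2, trace_diag_mul]

lemma spectral' {M : Matrix (Fin n) (Fin n) ℝ} (hH : M.IsHermitian) :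
    M = (hH.eigenvectorUnitary : Matrix (Fin n) (Fin n) ℝ) * diagonal hH.eigenvalues *
        star (hH.eigenvectorUnitary : Matrix (Fin n) (Fin n) ℝ) := by
  have := hH.spectral_theorem
  rwa [RCLike.ofReal_real_eq_id, Function.id_comp] at this

lemma trace_inv_eq {M : Matrix (Fin n) (Fin n) ℝ} (hM : M.PosDef) :
    M⁻¹.trace = ∑ i, (hM.1.eigenvalues i)⁻¹ := by
  set U := (hM.1.eigenvectorUnitary : Matrix (Fin n) (Fin n) ℝ) with hU
  have h1 : star U * U = 1 := Matrix.mem_unitaryGroup_iff'.mp hM.1.eigenvectorUnitary.2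
  have h2 : U * star U = 1 := Matrix.mem_unitaryGroup_iff.mp hM.1.eigenvectorUnitary.2
  have hvne : ∀ i, hM.1.eigenvalues i ≠ 0 := fun i => (hM.eigenvalues_pos i).ne'
  conv_lhs => rw [spectral' hM.1]
  rw [inv_conj h1 h2, inv_diagonal' hvne, trace_conj h1, trace_diagonal]

lemma shifted_posDef (hn : 2 ≤ n) {M : Matrix (Fin n) (Fin n) ℝ} (hM : M.PosDef)
    {δ : ℝ} (hδ : 0 < δ) (hpot : M⁻¹.trace ≤ 1 / δ) :
    (M - δ • (1 : Matrix (Fin n) (Fin n) ℝ)).PosDef := by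
  set U := (hM.1.eigenvectorUnitary : Matrix (Fin n) (Fin n) ℝ) with hU
  have h1 : star U * U = 1 := Matrix.mem_unitaryGroup_iff'.mp hM.1.eigenvectorUnitary.2
  have h2 : U * star U = 1 := Matrix.mem_unitaryGroup_iff.mp hM.1.eigenvectorUnitary.2
  set μ := hM.1.eigenvalues with hμ
  have hpos : ∀ i, 0 < μ i := hM.eigenvalues_pos
  have htr : M⁻¹.trace = ∑ i, (μ i)⁻¹ := trace_inv_eq hM
  have key : ∀ i, δ < μ i := by
    intro i
    have hnt : Nontrivial (Fin n) := Fin.nontrivial_iff_two_le.mpr hn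
    obtain ⟨k, hk⟩ := exists_ne i
    have herase : (μ i)⁻¹ + ∑ j ∈ Finset.univ.erase i, (μ j)⁻¹ = ∑ j, (μ j)⁻¹ :=
      Finset.add_sum_erase Finset.univ (fun j => (μ j)⁻¹) (Finset.mem_univ i)
    have hpos' : 0 < ∑ j ∈ Finset.univ.erase i, (μ j)⁻¹ :=
      Finset.sum_pos (fun j _ => inv_pos.2 (hpos j))
        ⟨k, Finset.mem_erase.2 ⟨hk, Finset.mem_univ k⟩⟩
    have h3 : (μ i)⁻¹ < 1 / δ := by
      have := htr ▸ hpot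
      linarith
    rw [one_div] at h3
    nlinarith [h3, mul_pos (hpos i) hδ, inv_mul_cancel₀ (hpos i).ne', inv_mul_cancel₀ hδ.ne',
      inv_pos.2 (hpos i), inv_pos.2 hδ]
  have hδ1 : U * diagonal (fun _ : Fin n => δ) * star U = δ • 1 := by
    have e : diagonal (fun _ : Fin n => δ) = δ • (1 : Matrix (Fin n) (Fin n) ℝ) := by
      have : (fun _ : Fin n => δ) = δ • (fun _ : Fin n => (1:ℝ)) := by funext i; simp
      rw [this, diagonal_smul]
      congr 1
    rw [e, mul_smul_comm, smul_mul_assoc, mul_one, h2]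
  have hspec : M - δ • (1 : Matrix (Fin n) (Fin n) ℝ)
      = U * diagonal (fun i => μ i - δ) * star U := by
    conv_lhs => rw [spectral' hM.1, ← hδ1]
    rw [← Matrix.sub_mul, ← Matrix.mul_sub, diagonal_sub]
  rw [hspec]
  exact conj_diag_posDef h1 (fun i => sub_pos.2 (key i))

lemma core_traces {B X : Matrix (Fin n) (Fin n) ℝ} (hB : B.PosDef) (hX : X.PosSemidef)
    {α : ℝ} (hα : 0 < α) :
    ∃ d w : Fin n → ℝ, (∀ i, 0 ≤ d i) ∧ (∀ i, 0 ≤ w i) ∧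
      B⁻¹.trace = ∑ i, w i ∧ (B⁻¹ * X).trace = ∑ i, d i ∧
      (B⁻¹ * B⁻¹ * X).trace = ∑ i, d i * w i ∧
      (B + α • X)⁻¹.trace = ∑ i, (1 + α * d i)⁻¹ * w i := by
  have hBps := hB.posSemidef
  set S := CFC.sqrt B with hSdef
  have hSps : S.PosSemidef := (CFC.sqrt_nonneg B).posSemidef
  have hSS : S * S = B := CFC.sqrt_mul_sqrt_self B hBps.nonneg
  have hdetS : IsUnit S.det := by
    have hd : S.det * S.det = B.det := by rw [← det_mul, hSS]
    have hd2 : S.det ≠ 0 := by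
      intro h
      rw [h, mul_zero] at hd
      exact absurd hd.symm hB.det_pos.ne'
    exact isUnit_iff_ne_zero.mpr hd2
  have hSi1 : S * S⁻¹ = 1 := Matrix.mul_nonsing_inv S hdetS
  have hSi2 : S⁻¹ * S = 1 := Matrix.nonsing_inv_mul S hdetS
  have hSHi : (S⁻¹)ᴴ = S⁻¹ := by rw [Matrix.conjTranspose_nonsing_inv, hSps.1]
  have hBinv : B⁻¹ = S⁻¹ * S⁻¹ := by rw [← hSS, Matrix.mul_inv_rev]
  set Y := S⁻¹ * X * S⁻¹ with hYdef
  have hY : Y.PosSemidef := by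
    have := hX.conjTranspose_mul_mul_same S⁻¹
    rwa [hSHi] at this
  set V := (hY.1.eigenvectorUnitary : Matrix (Fin n) (Fin n) ℝ) with hVdef
  have hv1 : star V * V = 1 := Matrix.mem_unitaryGroup_iff'.mp hY.1.eigenvectorUnitary.2
  have hv2 : V * star V = 1 := Matrix.mem_unitaryGroup_iff.mp hY.1.eigenvectorUnitary.2
  set d := hY.1.eigenvalues with hddef
  have hYspec : Y = V * diagonal d * star V := spectral' hY.1
  have hd : ∀ i, 0 ≤ d i := hY.eigenvalues_nonneg
  set W := star V * B⁻¹ * V with hWdef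
  have hW : W.PosSemidef := by
    have := (hB.inv.posSemidef).conjTranspose_mul_mul_same V
    rwa [← Matrix.star_eq_conjTranspose] at this
  refine ⟨d, fun i => W i i, hd, diag_nonneg hW, ?_, ?_, ?_, ?_⟩
  · -- B⁻¹.trace = ∑ W i i
    have e : W.trace = B⁻¹.trace := by
      rw [hWdef, Matrix.trace_mul_cycle, hv2, one_mul]
    rw [← e]
    rfl
  · -- (B⁻¹ * X).trace = ∑ d i
    have e1 : Y.trace = (B⁻¹ * X).trace := by
      rw [hYdef, Matrix.trace_mul_cycle, ← hBinv]
    rw [← e1, hYspec, trace_conj hv1, trace_diagonal]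
  · -- (B⁻¹ * B⁻¹ * X).trace = ∑ d i * W i i
    have e2 : (Y * B⁻¹).trace = (B⁻¹ * B⁻¹ * X).trace := by
      have a1 : Y * B⁻¹ = S⁻¹ * (X * (S⁻¹ * B⁻¹)) := by
        rw [hYdef]; simp only [Matrix.mul_assoc]
      rw [a1, Matrix.trace_mul_comm]
      have a2 : X * (S⁻¹ * B⁻¹) * S⁻¹ = X * (S⁻¹ * B⁻¹ * S⁻¹) := by
        simp only [Matrix.mul_assoc]
      have a3 : S⁻¹ * B⁻¹ * S⁻¹ = B⁻¹ * B⁻¹ := by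
        rw [hBinv]; simp only [Matrix.mul_assoc]
      rw [a2, a3, Matrix.trace_mul_comm, Matrix.mul_assoc]
    rw [← e2, hYspec, trace_conj_diag, ← hWdef]
  · -- (B + α • X)⁻¹.trace = ∑ (1 + α d i)⁻¹ W i i
    have hSYS : S * Y * S = X := by
      have : S * Y * S = S * S⁻¹ * X * (S⁻¹ * S) := by
        rw [hYdef]; simp only [Matrix.mul_assoc]
      rw [this, hSi1, hSi2, one_mul, mul_one]
    have hNaX : B + α • X = S * (1 + α • Y) * S := by
      rw [mul_add, add_mul, mul_one, hSS, mul_smul_comm, smul_mul_assoc, hSYS]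
    have h1d : diagonal (fun _ : Fin n => (1:ℝ)) = 1 := diagonal_one
    have hdiag : diagonal (fun i => 1 + α * d i)
        = (1 : Matrix (Fin n) (Fin n) ℝ) + α • diagonal d := by
      ext i j
      rcases eq_or_ne i j with h | h
      · subst h; simp
      · simp [Matrix.diagonal_apply_ne _ h, Matrix.one_apply_ne h]
    have hIYspec : (1 : Matrix (Fin n) (Fin n) ℝ) + α • Y
        = V * diagonal (fun i => 1 + α * d i) * star V := by
      rw [hdiag, mul_add, add_mul, mul_one, hv2, mul_smul_comm, smul_mul_assoc, ← hYspec]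
    have hc : ∀ i, (1:ℝ) + α * d i ≠ 0 := fun i =>
      (by nlinarith [hd i] : (0:ℝ) < 1 + α * d i).ne'
    have hinv : (B + α • X)⁻¹
        = S⁻¹ * (V * diagonal (fun i => (1 + α * d i)⁻¹) * star V) * S⁻¹ := by
      rw [hNaX, Matrix.mul_inv_rev, Matrix.mul_inv_rev, hIYspec, inv_conj hv1 hv2,
        inv_diagonal' hc]
      simp only [Matrix.mul_assoc]
    rw [hinv, Matrix.trace_mul_cycle, ← hBinv, Matrix.trace_mul_comm, trace_conj_diag,
      ← hWdef]

lemma scalar_ineq (d w : Fin n → ℝ) (hd : ∀ i, 0 ≤ d i) (hw : ∀ i, 0 ≤ w i)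
    {α : ℝ} (hα : 0 < α) :
    ∑ i, (1 + α * d i)⁻¹ * w i
      ≤ ∑ i, w i - α * (∑ i, d i * w i) / (1 + α * ∑ i, d i) := by
  have ht : 0 ≤ ∑ i, d i := Finset.sum_nonneg fun i _ => hd i
  have expand : α * (∑ i, d i * w i) / (1 + α * ∑ i, d i)
      = ∑ i, α * (d i * w i) / (1 + α * ∑ j, d j) := by
    rw [Finset.mul_sum, Finset.sum_div]
  rw [expand, ← Finset.sum_sub_distrib]
  apply Finset.sum_le_sum
  intro i _
  have hdi : 0 < 1 + α * d i := by nlinarith [hd i]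
  have hle : 1 + α * d i ≤ 1 + α * ∑ j, d j := by
    have : d i ≤ ∑ j, d j := Finset.single_le_sum (fun j _ => hd j) (Finset.mem_univ i)
    nlinarith
  have k1 : α * (d i * w i) / (1 + α * ∑ j, d j) ≤ α * (d i * w i) / (1 + α * d i) :=
    div_le_div_of_nonneg_left (mul_nonneg hα.le (mul_nonneg (hd i) (hw i))) hdi hle
  have k2 : (1 + α * d i)⁻¹ * w i = w i - α * (d i * w i) / (1 + α * d i) := by
    field_simp
    ring
  linarith [k1, k2]


end BSSAux

open BSSAux in
/-- **Analog of BSS Lemma 3.4 for arbitrary-rank updates.** Here the condition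
`λ_min(A) > ℓ` is expressed as positive definiteness of `A − ℓ·I`. -/
theorem bss_lower_barrier_shift {n : ℕ} (hn : 2 ≤ n)
    (A X : Matrix (Fin n) (Fin n) ℝ) (hA : A.IsSymm) (hX : X.PosSemidef)
    (ℓ δL : ℝ) (hδL : 0 < δL)
    (hl : (A - ℓ • (1 : Matrix (Fin n) (Fin n) ℝ)).PosDef)
    (hpot : lowerPot ℓ A ≤ 1 / δL)
    (N : Matrix (Fin n) (Fin n) ℝ)
    (hN : N = A - (ℓ + δL) • (1 : Matrix (Fin n) (Fin n) ℝ))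
    (α : ℝ) (hα : 0 < α)
    (hLA : 1 / α ≤
      (N⁻¹ * N⁻¹ * X).trace / (lowerPot (ℓ + δL) A - lowerPot ℓ A) - (N⁻¹ * X).trace) :
    N.PosDef ∧
    ((A + α • X) - (ℓ + δL) • (1 : Matrix (Fin n) (Fin n) ℝ)).PosDef ∧
    lowerPot (ℓ + δL) (A + α • X) ≤ lowerPot ℓ A := by
  have hNM : N = (A - ℓ • (1 : Matrix (Fin n) (Fin n) ℝ)) - δL • 1 := by
    rw [hN, add_smul]; abel
  have hNpd : N.PosDef := by
    rw [hNM]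
    exact shifted_posDef hn hl hδL hpot
  have hshift : A + α • X - (ℓ + δL) • (1 : Matrix (Fin n) (Fin n) ℝ) = N + α • X := by
    rw [hN]; abel
  have hNaXpd : ((A + α • X) - (ℓ + δL) • (1 : Matrix (Fin n) (Fin n) ℝ)).PosDef := by
    rw [hshift]
    exact hNpd.add_posSemidef (smul_posSemidef hX hα.le)
  refine ⟨hNpd, hNaXpd, ?_⟩
  obtain ⟨d, w, hd, hw, T0, T1, T2, T3⟩ := core_traces hNpd hX hα
  have lp1 : lowerPot (ℓ + δL) A = N⁻¹.trace := by
    unfold lowerPot; rw [hN]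
  have lp2 : lowerPot (ℓ + δL) (A + α • X) = (N + α • X)⁻¹.trace := by
    unfold lowerPot; rw [hshift]
  rw [T1, T2] at hLA
  have ht1 : 0 ≤ ∑ i, d i := Finset.sum_nonneg fun i _ => hd i
  have ht2 : 0 ≤ ∑ i, d i * w i :=
    Finset.sum_nonneg fun i _ => mul_nonneg (hd i) (hw i)
  set Δ := lowerPot (ℓ + δL) A - lowerPot ℓ A with hΔ
  clear_value Δ
  have hα' : 0 < 1 / α := by positivity
  have hΔpos : 0 < Δ := by
    by_contra h
    push_neg at h
    have : (∑ i, d i * w i) / Δ ≤ 0 := div_nonpos_iff.mpr (Or.inl ⟨ht2, h⟩)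
    linarith
  have hpos1 : 0 < 1 + α * ∑ i, d i := by nlinarith
  have hkey : Δ ≤ α * (∑ i, d i * w i) / (1 + α * ∑ i, d i) := by
    have h1 : (1 / α + ∑ i, d i) * Δ ≤ ∑ i, d i * w i := by
      have h2 : 1 / α + ∑ i, d i ≤ (∑ i, d i * w i) / Δ := by linarith
      exact (le_div_iff₀ hΔpos).mp h2
    rw [le_div_iff₀ hpos1]
    have h3 := mul_le_mul_of_nonneg_left h1 hα.le
    have e : α * ((1 / α + ∑ i, d i) * Δ) = Δ * (1 + α * ∑ i, d i) := by
      field_simp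
    linarith
  have core := scalar_ineq d w hd hw hα
  rw [lp2, T3]
  linarith [core, hkey, hΔ, lp1, T0]
end

section
/- There exists η_0 ∈ (0,1) such that for every η ∈ (0,η_0) and every positive integer k, setting n := 3k and ζ := 3η, the following holds. There are rank-one symmetric positive semidefinite n×n matrices B_{i,j} = v_{i,j} v_{i,j}^T for i ∈ {1,2,3}, j ∈ {1,...,k}, with Σ_{i,j} B_{i,j} = I, and symmetric positive definite n×n matrices X_1 = Diag(1, ζ³, ζ) ⊗ I_k and X_2 = Diag(1, 1/ζ³, 1/ζ) ⊗ I_k (so that X_1 is a scalar multiple of X_2^{−1}), where v_{1,j} = [1/√2, −1/√2, 0] ⊗ e_j, v_{2,j} = [1/√2, 1/√2, 0] ⊗ e_j, v_{3,j} = [0, 0, 1] ⊗ e_j, such that every pair (i,j) and α ≥ 0 satisfying α·⟨X_1, B_{i,j}⟩ ≥ (1−η)·tr(X_1) and α·⟨X_2, B_{i,j}⟩ ≤ (1+η)·tr(X_2) must also satisfy α·tr(B_{i,j}) ≥ (1−η)·n/(9η). In particular, any oracle satisfying these two inequalities together with α·tr(B_{i,j}) ≤ ρ requires ρ = Ω(n/η).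 -/
open Finset

/-- The base vectors `[1/√2, −1/√2, 0]`, `[1/√2, 1/√2, 0]`, `[0, 0, 1]`. -/
noncomputable def lbBase : Fin 3 → Fin 3 → ℝ :=
  ![![1 / Real.sqrt 2, -(1 / Real.sqrt 2), 0],
    ![1 / Real.sqrt 2, 1 / Real.sqrt 2, 0],
    ![0, 0, 1]]

/-- The vector `v_{i,j} = lbBase i ⊗ e_j ∈ ℝ^{3k}` (indexed by `Fin 3 × Fin k`). -/
noncomputable def lbVec (k : ℕ) (i : Fin 3) (j : Fin k) : Fin 3 × Fin k → ℝ :=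
  fun p => if p.2 = j then lbBase i p.1 else 0

/-- The rank-one matrix `B_{i,j} = v_{i,j} v_{i,j}ᵀ`. -/
noncomputable def lbB (k : ℕ) (i : Fin 3) (j : Fin k) :
    Matrix (Fin 3 × Fin k) (Fin 3 × Fin k) ℝ :=
  Matrix.vecMulVec (lbVec k i j) (lbVec k i j)

/-- The diagonal matrix `Diag(1, ζ³, ζ) ⊗ I_k`. -/
noncomputable def lbX (k : ℕ) (ζ : ℝ) : Matrix (Fin 3 × Fin k) (Fin 3 × Fin k) ℝ :=
  Matrix.diagonal fun p => ![1, ζ ^ 3, ζ] p.1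

lemma lbBase_ortho (a b : Fin 3) :
    (∑ i : Fin 3, lbBase i a * lbBase i b) = if a = b then 1 else 0 := by
  have hs : Real.sqrt 2 * Real.sqrt 2 = 2 := Real.mul_self_sqrt (by norm_num)
  fin_cases a <;> fin_cases b <;>
    simp [lbBase, Fin.sum_univ_three, div_mul_div_comm, hs] <;>
    rw [← mul_inv, hs] <;> norm_num

lemma lbB_sum (k : ℕ) : (∑ i : Fin 3, ∑ j : Fin k, lbB k i j) = 1 := by
  ext p q
  rw [Finset.sum_comm]
  simp only [Matrix.sum_apply, lbB, Matrix.vecMulVec_apply, lbVec]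
  rcases p with ⟨a, b⟩; rcases q with ⟨c, d⟩
  simp only [Matrix.one_apply, Prod.mk.injEq, Prod.ext_iff]
  by_cases hbd : b = d
  · subst hbd
    rw [Finset.sum_eq_single b]
    · simp [lbBase_ortho]
    · intro j _ hj; simp [Ne.symm hj]
    · simp
  · rw [Finset.sum_eq_zero]
    · simp [hbd]
    · intro j _
      by_cases h : b = j <;> by_cases h2 : d = j <;> simp_all

lemma trace_diag_mul (k : ℕ) (d : Fin 3 → ℝ) (i : Fin 3) (j : Fin k) :
    ((Matrix.diagonal fun p : Fin 3 × Fin k => d p.1) * lbB k i j).trace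
      = ∑ a : Fin 3, d a * (lbBase i a) ^ 2 := by
  simp only [Matrix.trace, Matrix.diag, Matrix.diagonal_mul, lbB,
    Matrix.vecMulVec_apply, lbVec]
  rw [Fintype.sum_prod_type]
  simp [Finset.mul_sum, sq, mul_ite]

lemma lbBase_norm (i : Fin 3) : (∑ a : Fin 3, lbBase i a ^ 2) = 1 := by
  have hs : Real.sqrt 2 * Real.sqrt 2 = 2 := Real.mul_self_sqrt (by norm_num)
  fin_cases i <;>
    simp [lbBase, Fin.sum_univ_three, sq, div_mul_div_comm, hs] <;>
    rw [← mul_inv, hs] <;> norm_num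

lemma trace_lbB (k : ℕ) (i : Fin 3) (j : Fin k) : (lbB k i j).trace = 1 := by
  have h := trace_diag_mul k (fun _ => 1) i j
  simp only [Matrix.diagonal_one, Matrix.one_mul, one_mul] at h
  rw [h, lbBase_norm]

lemma trace_diag (k : ℕ) (d : Fin 3 → ℝ) :
    (Matrix.diagonal fun p : Fin 3 × Fin k => d p.1).trace = k * ∑ a, d a := by
  simp [Matrix.trace, Matrix.diag, Fintype.sum_prod_type_right, mul_comm]

lemma trace_lbX (k : ℕ) (ζ : ℝ) : (lbX k ζ).trace = k * (1 + ζ ^ 3 + ζ) := by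
  rw [lbX, trace_diag]; simp [Fin.sum_univ_three]

lemma trace_lbX_mul (k : ℕ) (ζ : ℝ) (i : Fin 3) (j : Fin k) :
    (lbX k ζ * lbB k i j).trace = ![(1 + ζ ^ 3) / 2, (1 + ζ ^ 3) / 2, ζ] i := by
  have hs : Real.sqrt 2 ^ 2 = 2 := Real.sq_sqrt (by norm_num)
  rw [lbX, trace_diag_mul]
  fin_cases i <;> simp [lbBase, Fin.sum_univ_three, div_pow, hs] <;> ring

lemma lbX_posDef (k : ℕ) {ζ : ℝ} (hζ : 0 < ζ) : (lbX k ζ).PosDef := by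
  rw [lbX, Matrix.posDef_diagonal_iff]
  rintro ⟨a, b⟩
  fin_cases a <;> simp <;> positivity

lemma lbX_inv (k : ℕ) {ζ : ℝ} (hζ : ζ ≠ 0) : (lbX k ζ)⁻¹ = lbX k ζ⁻¹ := by
  apply Matrix.inv_eq_right_inv
  rw [lbX, lbX, Matrix.diagonal_mul_diagonal]
  have h : (fun p : Fin 3 × Fin k => ![1, ζ ^ 3, ζ] p.1 * ![1, (ζ⁻¹) ^ 3, ζ⁻¹] p.1)
      = fun _ => (1 : ℝ) := by
    funext p
    rcases p with ⟨a, b⟩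
    fin_cases a <;> simp <;> field_simp
  rw [h, Matrix.diagonal_one]

lemma lbX_inv_inv (k : ℕ) {ζ : ℝ} (hζ : ζ ≠ 0) : ((lbX k ζ)⁻¹)⁻¹ = lbX k ζ := by
  rw [lbX_inv k hζ, lbX_inv k (inv_ne_zero hζ), inv_inv]

/-- **Optimality of the MMWUM oracle (Proposition on oracle width).**
For all sufficiently small `η > 0` and every `k ≥ 1` (with `n := 3k`,
`ζ := 3η`), the rank-one PSD matrices `B_{i,j} = v_{i,j}v_{i,j}ᵀ` sum to the
identity, `X₁ = Diag(1,ζ³,ζ) ⊗ I_k` and `X₂ = Diag(1,1/ζ³,1/ζ) ⊗ I_k` are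
positive definite with `X₁` a scalar multiple of `X₂⁻¹`, and any `(i,j)` and
`α ≥ 0` satisfying the first two oracle inequalities must have
`α·tr(B_{i,j}) ≥ (1−η)·n/(9η)`; hence any width bound `ρ` is `Ω(n/η)`. -/
theorem mmwum_oracle_lower_bound :
    ∃ η₀ : ℝ, η₀ ∈ Set.Ioo (0 : ℝ) 1 ∧
      ∀ η : ℝ, η ∈ Set.Ioo 0 η₀ → ∀ k : ℕ, 0 < k →
        (∑ i : Fin 3, ∑ j : Fin k, lbB k i j) = 1 ∧
        (lbX k (3 * η)).PosDef ∧
        (lbX k (3 * η)⁻¹).PosDef ∧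
        (∃ c : ℝ, lbX k (3 * η) = c • (lbX k (3 * η)⁻¹)⁻¹) ∧
        ∀ (i : Fin 3) (j : Fin k) (α : ℝ), 0 ≤ α →
          (1 - η) * (lbX k (3 * η)).trace ≤ α * (lbX k (3 * η) * lbB k i j).trace →
          α * (lbX k (3 * η)⁻¹ * lbB k i j).trace ≤ (1 + η) * (lbX k (3 * η)⁻¹).trace →
          (1 - η) * (3 * k : ℝ) / (9 * η) ≤ α * (lbB k i j).trace := by
  refine ⟨1/100, ⟨by norm_num, by norm_num⟩, ?_⟩
  intro η ⟨hη0, hη1⟩ k hk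
  have hζ0 : 0 < 3 * η := by positivity
  have hζne : 3 * η ≠ 0 := ne_of_gt hζ0
  have hkk : (1 : ℝ) ≤ (k : ℝ) := by exact_mod_cast hk
  refine ⟨lbB_sum k, lbX_posDef k hζ0, lbX_posDef k (by positivity),
    ⟨1, by rw [one_smul, lbX_inv k (inv_ne_zero hζne), inv_inv]⟩, ?_⟩
  intro i j α hα h1 h2
  rw [trace_lbX, trace_lbX_mul] at h1
  rw [trace_lbX, trace_lbX_mul] at h2
  rw [trace_lbB, mul_one, div_le_iff₀ (by positivity : (0:ℝ) < 9 * η)]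
  have hp2 : η * η < η * (1/100) := by
    have := mul_lt_mul_of_pos_left hη1 hη0; linarith
  have hp3 : η * η * η < η * η * (1/100) :=
    mul_lt_mul_of_pos_left hη1 (by positivity)
  have hp4 : η * η * η * η < η * η * η * (1/100) :=
    mul_lt_mul_of_pos_left hη1 (by positivity)
  have hpos : 0 < η - 12 * η ^ 2 - 9 * η ^ 3 - 54 * η ^ 4 := by nlinarith
  have hkpos : (0:ℝ) < (k : ℝ) := by linarith
  fin_cases i <;>
    simp only [show ((⟨0, by norm_num⟩ : Fin 3)) = 0 from rfl,
      show ((⟨1, by norm_num⟩ : Fin 3)) = 1 from rfl,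
      show ((⟨2, by norm_num⟩ : Fin 3)) = 2 from rfl,
      Matrix.cons_val_zero, Matrix.cons_val_one, Matrix.head_cons,
      Matrix.cons_val_two, Matrix.tail_cons] at h1 h2
  · -- i = 0 : conditions contradictory
    have h2' : α * ((1 + (3*η) ^ 3) / 2) ≤ (1 + η) * ((k : ℝ) * ((3*η) ^ 3 + 1 + (3*η) ^ 2)) := by
      calc α * ((1 + (3*η) ^ 3) / 2) = (α * ((1 + ((3*η)⁻¹) ^ 3) / 2)) * (3*η) ^ 3 := by
            field_simp; ring
        _ ≤ ((1 + η) * ((k : ℝ) * (1 + ((3*η)⁻¹) ^ 3 + (3*η)⁻¹))) * (3*η) ^ 3 :=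
            mul_le_mul_of_nonneg_right h2 (by positivity)
        _ = (1 + η) * ((k : ℝ) * ((3*η) ^ 3 + 1 + (3*η) ^ 2)) := by field_simp
    exfalso
    nlinarith [h1, h2', mul_pos hkpos hpos]
  · have h2' : α * ((1 + (3*η) ^ 3) / 2) ≤ (1 + η) * ((k : ℝ) * ((3*η) ^ 3 + 1 + (3*η) ^ 2)) := by
      calc α * ((1 + (3*η) ^ 3) / 2) = (α * ((1 + ((3*η)⁻¹) ^ 3) / 2)) * (3*η) ^ 3 := by
            field_simp; ring
        _ ≤ ((1 + η) * ((k : ℝ) * (1 + ((3*η)⁻¹) ^ 3 + (3*η)⁻¹))) * (3*η) ^ 3 :=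
            mul_le_mul_of_nonneg_right h2 (by positivity)
        _ = (1 + η) * ((k : ℝ) * ((3*η) ^ 3 + 1 + (3*η) ^ 2)) := by field_simp
    exfalso
    nlinarith [h1, h2', mul_pos hkpos hpos]
  · -- i = 2
    nlinarith [h1, mul_nonneg (mul_nonneg (by linarith : (0:ℝ) ≤ 1 - η)
      hkpos.le) (by positivity : (0:ℝ) ≤ (3*η) ^ 3 + 3*η)]
end

section
/- Let B_1, ..., B_m be nonzero symmetric positive semidefinite n×n real matrices with Σ_{i=1}^m B_i = I. Let γ > 0 and let δ_U, δ_L > 0 satisfy 1/δ_L − n ≥ 1/δ_U. Then for any symmetric positive definite n×n matrices X_L and X_U each with trace one, there exist j ∈ {1,...,m} and α ≥ 0 such that δ_U ≥ ((exp(γ·α·tr B_j) − 1)/tr B_j)·⟨X_U, B_j⟩ and δ_L ≤ ((1 − exp(−γ·α·tr B_j))/tr B_j)·⟨X_L, B_j⟩. -/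
open Finset

open Matrix in
lemma trace_mul_pos_aux {n : ℕ} {X M : Matrix (Fin n) (Fin n) ℝ}
    (hX : X.PosDef) (hM : M.PosSemidef) (hM0 : M ≠ 0) : 0 < (X * M).trace := by
  obtain ⟨k, C, hC⟩ : ∃ k, ∃ C : Matrix (Fin k) (Fin n) ℝ, M = Cᴴ * C := by
    obtain ⟨k, v, hv⟩ := Matrix.posSemidef_iff_eq_sum_vecMulVec.mp hM
    refine ⟨k, Matrix.of v, ?_⟩
    subst hv; ext a b
    simp [Matrix.mul_apply, Matrix.vecMulVec_apply, Matrix.sum_apply]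
  have key : (X * M).trace = ∑ i, ((C i) ⬝ᵥ (X *ᵥ (C i))) := by
    subst hC
    rw [← Matrix.mul_assoc, Matrix.trace_mul_cycle]
    simp only [Matrix.trace, Matrix.diag, Matrix.mul_apply, Matrix.conjTranspose_apply,
      dotProduct, Matrix.mulVec, star_trivial]
    refine Finset.sum_congr rfl fun i _ => ?_
    simp only [Finset.sum_mul, Finset.mul_sum]
    rw [Finset.sum_comm]
    exact Finset.sum_congr rfl fun x _ => Finset.sum_congr rfl fun y _ => by ring
  have hCne : C ≠ 0 := by rintro rfl; simp at hC; exact hM0 hC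
  obtain ⟨i, j, hij⟩ : ∃ i j, C i j ≠ 0 := by
    by_contra h; push_neg at h; exact hCne (by ext i j; simpa using h i j)
  rw [key]
  refine Finset.sum_pos' (fun k _ => ?_) ⟨i, Finset.mem_univ i, ?_⟩
  · simpa using hX.posSemidef.dotProduct_mulVec_nonneg (C k)
  · have : C i ≠ 0 := fun h => hij (by simp [h])
    simpa using hX.dotProduct_mulVec_pos this

/-- **The oracle for the width-free MMWUM (Theorem 7).** -/
theorem width_free_mmwum_oracle (n m : ℕ)
    (B : Fin m → Matrix (Fin n) (Fin n) ℝ)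
    (hB : ∀ i, (B i).PosSemidef) (hB0 : ∀ i, B i ≠ 0)
    (hsum : ∑ i, B i = 1)
    (γ : ℝ) (hγ : 0 < γ)
    (δU δL : ℝ) (hδU : 0 < δU) (hδL : 0 < δL)
    (hδ : 1 / δL - n ≥ 1 / δU)
    (XL XU : Matrix (Fin n) (Fin n) ℝ)
    (hXL : XL.PosDef) (hXU : XU.PosDef)
    (hXLtr : XL.trace = 1) (hXUtr : XU.trace = 1) :
    ∃ (j : Fin m) (α : ℝ), 0 ≤ α ∧
      δU ≥ (Real.exp (γ * α * (B j).trace) - 1) / (B j).trace * (XU * B j).trace ∧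
      δL ≤ (1 - Real.exp (-(γ * α * (B j).trace))) / (B j).trace * (XL * B j).trace := by
  have hone : (1 : Matrix (Fin n) (Fin n) ℝ).PosDef := by
    rw [← Matrix.diagonal_one]
    exact .diagonal fun _ => one_pos
  -- n > 0
  have hn : n ≠ 0 := by
    rintro rfl
    simp [Matrix.trace] at hXLtr
  haveI : Nonempty (Fin n) := ⟨⟨0, Nat.pos_of_ne_zero hn⟩⟩
  -- m > 0
  have hm : (Finset.univ : Finset (Fin m)).Nonempty := by
    have hm0 : m ≠ 0 := by
      rintro rfl
      simp only [Finset.univ_eq_empty, Finset.sum_empty] at hsum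
      exact zero_ne_one hsum
    exact ⟨⟨0, Nat.pos_of_ne_zero hm0⟩, Finset.mem_univ _⟩
  -- trace identities
  have ht : ∀ j, 0 < (B j).trace := fun j => by
    have := trace_mul_pos_aux hone (hB j) (hB0 j); rwa [one_mul] at this
  have ha : ∀ j, 0 < (XU * B j).trace := fun j => trace_mul_pos_aux hXU (hB j) (hB0 j)
  have hbp : ∀ j, 0 < (XL * B j).trace := fun j => trace_mul_pos_aux hXL (hB j) (hB0 j)
  have hts : ∑ j, (B j).trace = (n : ℝ) := by
    rw [← Matrix.trace_sum, hsum, Matrix.trace_one]; simp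
  have has : ∑ j, (XU * B j).trace = 1 := by
    rw [← Matrix.trace_sum, ← Finset.mul_sum, hsum, mul_one, hXUtr]
  have hbs : ∑ j, (XL * B j).trace = 1 := by
    rw [← Matrix.trace_sum, ← Finset.mul_sum, hsum, mul_one, hXLtr]
  -- find the good index
  obtain ⟨j, -, hj⟩ : ∃ j ∈ Finset.univ,
      (B j).trace ≤ (XL * B j).trace / δL - (XU * B j).trace / δU := by
    apply Finset.exists_le_of_sum_le hm
    rw [hts, Finset.sum_sub_distrib, ← Finset.sum_div, ← Finset.sum_div, has, hbs]
    linarith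
  set t := (B j).trace with htdef
  set a := (XU * B j).trace with hadef
  set b := (XL * B j).trace with hbdef
  have htp : 0 < t := ht j
  have hap : 0 < a := ha j
  have hbpj : 0 < b := hbp j
  have hkey : δL * a ≤ δU * (b - δL * t) := by
    have h2 : b / δL - a / δU = (δU * b - δL * a) / (δL * δU) := by field_simp
    rw [h2, le_div_iff₀ (by positivity)] at hj
    nlinarith
  have hpos : 0 < b - δL * t := by nlinarith
  refine ⟨j, Real.log (b / (b - δL * t)) / (γ * t), ?_, ?_, ?_⟩
  · apply div_nonneg _ (le_of_lt (mul_pos hγ htp))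
    apply Real.log_nonneg
    rw [le_div_iff₀ hpos]
    nlinarith
  all_goals
    have hgt : γ * (Real.log (b / (b - δL * t)) / (γ * t)) * t = Real.log (b / (b - δL * t)) := by
      field_simp
    rw [hgt]
  · rw [Real.exp_log (div_pos hbpj hpos)]
    rw [ge_iff_le]
    have h1 : (b / (b - δL * t) - 1) / t * a = δL * a / (b - δL * t) := by
      field_simp; ring
    rw [h1, div_le_iff₀ hpos]
    linarith
  · rw [← Real.log_inv, Real.exp_log (by positivity), inv_div]
    have h2 : (1 - (b - δL * t) / b) / t * b = δL := by field_simp; ring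
    rw [h2]
end
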